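/- arXiv:2510.22377 — 2 statements merged into one kernel-verified Lean document; each statement's English description precedes it below -/
import Mathlib

section
/- A right-infinite binary word w : ℕ → {a,b} is Sturmian (balanced and aperiodic) if and only if there exist an irrational α ∈ (0,1) and a real number ρ such that w equals the lower mechanical word s_{α,ρ} or the upper mechanical word s'_{α,ρ}. (Mechanical words with irrational slope are exactly the cutting words of lines y = mx + c with irrational slope over right-infinite intervals.) -/
/-!
STATEMENT 9: A right-infinite binary word `w` (`a = false`, `b = true`) is
Sturmian (balanced and aperiodic) if and only if there exist an irrational
`α ∈ (0,1)` and `ρ ∈ ℝ` such that `w` is the lower mechanical word `s_{α,ρ}`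
or the upper mechanical word `s'_{α,ρ}`.
-/

namespace StringBricks

def IsFactor (w : ℕ → Bool) (u : List Bool) : Prop :=
  ∃ i : ℕ, ∀ j : Fin u.length, w (i + j) = u.get j

def BalancedWord (w : ℕ → Bool) : Prop :=
  ∀ u v : List Bool, IsFactor w u → IsFactor w v → u.length = v.length →
    |(u.count true : ℤ) - (v.count true : ℤ)| ≤ 1

def EventuallyPeriodic (w : ℕ → Bool) : Prop :=
  ∃ N p : ℕ, 1 ≤ p ∧ ∀ n : ℕ, N ≤ n → w (n + p) = w n

def SturmianWord (w : ℕ → Bool) : Prop :=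
  BalancedWord w ∧ ¬ EventuallyPeriodic w

/-- Lower mechanical word: `s_{α,ρ}(n) = b (= true)` iff
`⌊(n+1)α+ρ⌋ − ⌊nα+ρ⌋ = 1`. -/
noncomputable def lowerMechanical (α ρ : ℝ) : ℕ → Bool :=
  fun n => decide (⌊((n : ℝ) + 1) * α + ρ⌋ - ⌊(n : ℝ) * α + ρ⌋ = 1)

/-- Upper mechanical word: `s'_{α,ρ}(n) = b (= true)` iff
`⌈(n+1)α+ρ⌉ − ⌈nα+ρ⌉ = 1`. -/
noncomputable def upperMechanical (α ρ : ℝ) : ℕ → Bool :=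
  fun n => decide (⌈((n : ℝ) + 1) * α + ρ⌉ - ⌈(n : ℝ) * α + ρ⌉ = 1)

/-- weight of the window of length `n` starting at `i` -/
def win (w : ℕ → Bool) (i n : ℕ) : ℤ :=
  ∑ j ∈ Finset.range n, ((w (i + j)).toNat : ℤ)

lemma win_nonneg (w : ℕ → Bool) (i n : ℕ) : 0 ≤ win w i n :=
  Finset.sum_nonneg fun _ _ => by positivity

lemma win_one (w : ℕ → Bool) (i : ℕ) : win w i 1 = ((w i).toNat : ℤ) := by
  simp [win]

lemma win_add (w : ℕ → Bool) (i m n : ℕ) :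
    win w i (m + n) = win w i m + win w (i + m) n := by
  unfold win
  rw [Finset.sum_range_add]
  congr 1
  apply Finset.sum_congr rfl
  intro j _
  rw [Nat.add_assoc]

lemma win_mul (w : ℕ → Bool) (i m n : ℕ) :
    win w i (m * n) = ∑ j ∈ Finset.range m, win w (i + j * n) n := by
  induction m with
  | zero => simp [win]
  | succ m ih =>
      rw [Finset.sum_range_succ, ← ih, Nat.succ_mul, win_add]

lemma count_true_eq (u : List Bool) :
    (u.count true : ℤ) = ∑ j : Fin u.length, ((u.get j).toNat : ℤ) := by
  induction u with
  | nil => simp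
  | cons b t ih =>
      simp only [List.length_cons]
      rw [Fin.sum_univ_succ]
      cases b <;> simp [List.count_cons, ih] <;> ring

lemma count_eq_win (w : ℕ → Bool) (u : List Bool) (i : ℕ)
    (h : ∀ j : Fin u.length, w (i + j) = u.get j) :
    (u.count true : ℤ) = win w i u.length := by
  rw [count_true_eq, win, ← Fin.sum_univ_eq_sum_range]
  apply Finset.sum_congr rfl
  intro j _
  rw [← h j]



lemma win_zero (w : ℕ → Bool) (i : ℕ) : win w i 0 = 0 := by simp [win]


lemma ofFn_spec (w : ℕ → Bool) (i n : ℕ) :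
    ∀ j : Fin (List.ofFn (fun j : Fin n => w (i + j))).length,
      w (i + j) = (List.ofFn (fun j : Fin n => w (i + j))).get j := by
  intro j
  rw [List.get_ofFn]
  simp

lemma isFactor_ofFn (w : ℕ → Bool) (i n : ℕ) :
    IsFactor w (List.ofFn (fun j : Fin n => w (i + j))) :=
  ⟨i, ofFn_spec w i n⟩

lemma count_ofFn (w : ℕ → Bool) (i n : ℕ) :
    (((List.ofFn (fun j : Fin n => w (i + j))).count true : ℤ)) = win w i n := by
  rw [count_eq_win w _ i (ofFn_spec w i n)]
  simp [win]


open Classical in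
/-- minimal weight of windows of length `n` -/
noncomputable def kmin (w : ℕ → Bool) (n : ℕ) : ℤ :=
  if ∃ i, win w i n < win w 0 n then win w 0 n - 1 else win w 0 n

section
variable {w : ℕ → Bool} (hb : BalancedWord w)

include hb in
lemma bal_win (i i' n : ℕ) : |win w i n - win w i' n| ≤ 1 := by
  have h1 := isFactor_ofFn w i n
  have h2 := isFactor_ofFn w i' n
  have h := hb _ _ h1 h2 (by simp)
  rwa [count_ofFn, count_ofFn] at h

include hb in
lemma kmin_le (i n : ℕ) : kmin w n ≤ win w i n := by
  unfold kmin
  split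
  · next h =>
      have := abs_le.mp (bal_win hb i 0 n)
      omega
  · next h =>
      push_neg at h
      exact h i

include hb in
lemma le_kmin (i n : ℕ) : win w i n ≤ kmin w n + 1 := by
  unfold kmin
  split
  · next h =>
      obtain ⟨i0, hi0⟩ := h
      have h1 := abs_le.mp (bal_win hb i i0 n)
      have h2 := abs_le.mp (bal_win hb i0 0 n)
      omega
  · next h =>
      have := abs_le.mp (bal_win hb i 0 n)
      omega

include hb in
lemma kmin_nonneg (n : ℕ) : 0 ≤ kmin w n := by
  unfold kmin
  split
  · next h =>
      obtain ⟨i0, hi0⟩ := h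
      have h2 := abs_le.mp (bal_win hb i0 0 n)
      have := win_nonneg w i0 n
      omega
  · exact win_nonneg w 0 n

include hb in
lemma kmin_key (a b : ℕ) : (b : ℤ) * kmin w a ≤ (a : ℤ) * (kmin w b + 1) := by
  have h1 : (b : ℤ) * kmin w a ≤ win w 0 (b * a) := by
    rw [win_mul]
    calc (b : ℤ) * kmin w a = ∑ _j ∈ Finset.range b, kmin w a := by
          rw [Finset.sum_const, nsmul_eq_mul, Finset.card_range]
      _ ≤ _ := Finset.sum_le_sum fun j _ => kmin_le hb _ a
  have h2 : win w 0 (a * b) ≤ (a : ℤ) * (kmin w b + 1) := by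
    rw [win_mul]
    calc ∑ j ∈ Finset.range a, win w (0 + j * b) b
        ≤ ∑ _j ∈ Finset.range a, (kmin w b + 1) :=
          Finset.sum_le_sum fun j _ => le_kmin hb _ b
      _ = (a : ℤ) * (kmin w b + 1) := by rw [Finset.sum_const, nsmul_eq_mul, Finset.card_range]
  rw [mul_comm b a] at h1
  exact h1.trans h2
end

noncomputable def alpha (w : ℕ → Bool) : ℝ :=
  ⨆ n : ℕ, ((kmin w (n + 1) : ℝ) / ((n : ℝ) + 1))

section
variable {w : ℕ → Bool} (hb : BalancedWord w)

include hb in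
lemma kmin_key_real (a b : ℕ) :
    (kmin w (a + 1) : ℝ) / ((a : ℝ) + 1) ≤ ((kmin w (b + 1) : ℝ) + 1) / ((b : ℝ) + 1) := by
  rw [div_le_div_iff₀ (by positivity) (by positivity)]
  have := kmin_key hb (a + 1) (b + 1)
  have h : ((b : ℤ) + 1) * kmin w (a + 1) ≤ ((a : ℤ) + 1) * (kmin w (b + 1) + 1) := by
    push_cast at this ⊢; linarith
  calc (kmin w (a + 1) : ℝ) * ((b : ℝ) + 1) = (((b : ℤ) + 1) * kmin w (a + 1) : ℤ) := by
        push_cast; ring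
    _ ≤ ((((a : ℤ) + 1) * (kmin w (b + 1) + 1) : ℤ) : ℝ) := by exact_mod_cast h
    _ = ((kmin w (b + 1) : ℝ) + 1) * ((a : ℝ) + 1) := by push_cast; ring

include hb in
lemma alpha_bdd : BddAbove (Set.range fun n : ℕ => ((kmin w (n + 1) : ℝ) / ((n : ℝ) + 1))) := by
  refine ⟨((kmin w 1 : ℝ) + 1) / 1, ?_⟩
  rintro x ⟨n, rfl⟩
  simpa using kmin_key_real hb n 0

include hb in
lemma alpha_lb (n : ℕ) : (kmin w (n + 1) : ℝ) ≤ ((n : ℝ) + 1) * alpha w := by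
  have := le_ciSup (alpha_bdd hb) n
  rw [div_le_iff₀ (by positivity)] at this
  calc (kmin w (n + 1) : ℝ) ≤ alpha w * ((n : ℝ) + 1) := this
    _ = ((n : ℝ) + 1) * alpha w := mul_comm _ _

include hb in
lemma alpha_ub (n : ℕ) : ((n : ℝ) + 1) * alpha w ≤ (kmin w (n + 1) : ℝ) + 1 := by
  have : alpha w ≤ ((kmin w (n + 1) : ℝ) + 1) / ((n : ℝ) + 1) :=
    ciSup_le fun m => kmin_key_real hb m n
  rw [le_div_iff₀ (by positivity)] at this
  linarith

include hb in
lemma alpha_lb' {n : ℕ} (hn : 1 ≤ n) : (kmin w n : ℝ) ≤ (n : ℝ) * alpha w := by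
  obtain ⟨m, rfl⟩ := Nat.exists_eq_add_of_le hn
  have := alpha_lb hb m
  rw [Nat.add_comm 1 m]
  push_cast at this ⊢
  linarith

include hb in
lemma alpha_ub' {n : ℕ} (hn : 1 ≤ n) : (n : ℝ) * alpha w ≤ (kmin w n : ℝ) + 1 := by
  obtain ⟨m, rfl⟩ := Nat.exists_eq_add_of_le hn
  have := alpha_ub hb m
  rw [Nat.add_comm 1 m]
  push_cast at this ⊢
  linarith
end

lemma sum_two_exceptions_lower {g : ℕ → ℤ} {lo : ℤ} {m j1 j2 : ℕ}
    (h12 : j1 < j2) (h2m : j2 < m) (hlo : ∀ j, lo ≤ g j)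
    (e1 : lo + 1 ≤ g j1) (e2 : lo + 1 ≤ g j2) :
    (m : ℤ) * lo + 2 ≤ ∑ j ∈ Finset.range m, g j := by
  have hsub : ({j1, j2} : Finset ℕ) ⊆ Finset.range m := by
    intro x hx
    simp only [Finset.mem_insert, Finset.mem_singleton] at hx
    rcases hx with rfl | rfl <;> simp [Finset.mem_range] <;> omega
  have hpair : ∑ j ∈ ({j1, j2} : Finset ℕ), (g j - lo) ≤
      ∑ j ∈ Finset.range m, (g j - lo) := by
    apply Finset.sum_le_sum_of_subset_of_nonneg hsub
    intro j _ _
    have := hlo j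
    omega
  rw [Finset.sum_pair (by omega : j1 ≠ j2)] at hpair
  have hdist : ∑ j ∈ Finset.range m, (g j - lo) =
      (∑ j ∈ Finset.range m, g j) - (m : ℤ) * lo := by
    rw [Finset.sum_sub_distrib, Finset.sum_const, nsmul_eq_mul, Finset.card_range]
  rw [hdist] at hpair
  omega

lemma sum_two_exceptions_upper {g : ℕ → ℤ} {hi : ℤ} {m j1 j2 : ℕ}
    (h12 : j1 < j2) (h2m : j2 < m) (hhi : ∀ j, g j ≤ hi)
    (e1 : g j1 ≤ hi - 1) (e2 : g j2 ≤ hi - 1) :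
    ∑ j ∈ Finset.range m, g j ≤ (m : ℤ) * hi - 2 := by
  have := sum_two_exceptions_lower (g := fun j => -g j) (lo := -hi) h12 h2m
    (fun j => by show -hi ≤ -g j; have := hhi j; omega)
    (by show -hi + 1 ≤ -g j1; omega) (by show -hi + 1 ≤ -g j2; omega)
  rw [Finset.sum_neg_distrib] at this
  have hmn : (m : ℤ) * -hi = -((m : ℤ) * hi) := by ring
  rw [hmn] at this
  linarith

section
variable {w : ℕ → Bool} (hb : BalancedWord w)

include hb in
lemma rational_periodic {p : ℤ} {q : ℕ} (hq : 1 ≤ q)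
    (hα : (q : ℝ) * alpha w = (p : ℝ)) : EventuallyPeriodic w := by
  -- p is kmin w q or kmin w q + 1
  have hpk1 : kmin w q ≤ p := by
    have h := alpha_lb' hb hq
    rw [hα] at h
    exact_mod_cast h
  have hpk2 : p ≤ kmin w q + 1 := by
    have h := alpha_ub' hb hq
    rw [hα] at h
    exact_mod_cast h
  -- bounds on multiples
  have hmul : ∀ m : ℕ, 1 ≤ m →
      kmin w (m * q) ≤ (m : ℤ) * p ∧ (m : ℤ) * p ≤ kmin w (m * q) + 1 := by
    intro m hm
    have hmq : 1 ≤ m * q := Nat.one_le_iff_ne_zero.mpr (by positivity)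
    have h1 := alpha_lb' hb hmq
    have h2 := alpha_ub' hb hmq
    have hcast : ((m * q : ℕ) : ℝ) * alpha w = ((m : ℤ) * p : ℤ) := by
      push_cast
      rw [mul_assoc, hα]
    rw [hcast] at h1 h2
    exact ⟨by exact_mod_cast h1, by exact_mod_cast h2⟩
  -- window weights of length q
  have hwl : ∀ s, kmin w q ≤ win w s q := fun s => kmin_le hb s q
  have hwu : ∀ s, win w s q ≤ kmin w q + 1 := fun s => le_kmin hb s q
  -- at most one exceptional window along each q-progression
  have key : ∀ i j1 j2, j1 < j2 → win w (i + j1 * q) q ≠ p →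
      win w (i + j2 * q) q ≠ p → False := by
    intro i j1 j2 h12 hb1 hb2
    have hS : win w i ((j2 + 1) * q) = ∑ j ∈ Finset.range (j2 + 1), win w (i + j * q) q :=
      win_mul w i (j2 + 1) q
    set m := j2 + 1 with hm
    have hmm : 1 ≤ m := by omega
    have hSl : kmin w (m * q) ≤ win w i (m * q) := kmin_le hb i (m * q)
    have hSu : win w i (m * q) ≤ kmin w (m * q) + 1 := le_kmin hb i (m * q)
    have h1 := (hmul m hmm).1
    have h2 := (hmul m hmm).2
    rcases (by omega : p = kmin w q ∨ p = kmin w q + 1) with hp | hp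
    · -- exceptional value is kmin + 1
      rw [hp] at hb1 hb2
      have : (m : ℤ) * kmin w q + 2 ≤ ∑ j ∈ Finset.range m, win w (i + j * q) q :=
        sum_two_exceptions_lower h12 (by omega) (fun j => hwl _)
        (by show kmin w q + 1 ≤ win w (i + j1 * q) q
            have := hwu (i + j1 * q); have := hwl (i + j1 * q); omega)
        (by show kmin w q + 1 ≤ win w (i + j2 * q) q
            have := hwu (i + j2 * q); have := hwl (i + j2 * q); omega)
      rw [← hS] at this
      rw [hp] at h1
      linarith
    · -- exceptional value is kmin
      rw [hp] at hb1 hb2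
      have : (∑ j ∈ Finset.range m, win w (i + j * q) q) ≤ (m : ℤ) * (kmin w q + 1) - 2 :=
        sum_two_exceptions_upper h12 (by omega) (fun j => hwu _)
        (by show win w (i + j1 * q) q ≤ kmin w q + 1 - 1
            have := hwu (i + j1 * q); have := hwl (i + j1 * q); omega)
        (by show win w (i + j2 * q) q ≤ kmin w q + 1 - 1
            have := hwu (i + j2 * q); have := hwl (i + j2 * q); omega)
      rw [← hS] at this
      rw [hp] at h2
      linarith
  -- along each progression, eventually the weight is p
  have hJ : ∀ i, ∃ J, ∀ j, J ≤ j → win w (i + j * q) q = p := by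
    intro i
    by_cases h : ∃ j, win w (i + j * q) q ≠ p
    · obtain ⟨j0, hj0⟩ := h
      exact ⟨j0 + 1, fun j hj => by_contra fun hne => key i j0 j (by omega) hj0 hne⟩
    · push_neg at h
      exact ⟨0, fun j _ => h j⟩
  choose J hJ' using hJ
  set M := (Finset.range q).sup J with hM
  have hN : ∀ i, q * M ≤ i → win w i q = p := by
    intro i hi
    have hq0 : 0 < q := hq
    have hr : i % q < q := Nat.mod_lt _ hq0
    have hjM : J (i % q) ≤ M := Finset.le_sup (Finset.mem_range.mpr hr)
    have hdiv : M ≤ i / q := by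
      rw [Nat.le_div_iff_mul_le hq0, Nat.mul_comm]
      exact hi
    have := hJ' (i % q) (i / q) (le_trans hjM hdiv)
    rwa [show i % q + i / q * q = i by rw [mul_comm]; exact Nat.mod_add_div i q] at this
  refine ⟨q * M, q, hq, fun n hn => ?_⟩
  have h1 : win w n q = p := hN n hn
  have h2 : win w (n + 1) q = p := hN (n + 1) (by omega)
  have e1 : win w n (1 + q) = win w n 1 + win w (n + 1) q := win_add w n 1 q
  have e2 : win w n (q + 1) = win w n q + win w (n + q) 1 := win_add w n q 1
  rw [Nat.add_comm 1 q, e2] at e1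
  rw [win_one, win_one, h1, h2] at e1
  have : ((w (n + q)).toNat : ℤ) = ((w n).toNat : ℤ) := by omega
  cases hwn : w n <;> cases hwq : w (n + q) <;> simp_all

end

section
variable {w : ℕ → Bool} (hb : BalancedWord w)

/-- prefix weight, as a real number offset by `n α` -/
noncomputable def cfun (w : ℕ → Bool) (n : ℕ) : ℝ :=
  (win w 0 n : ℝ) - (n : ℝ) * alpha w

include hb in
lemma alpha_strict {d : ℕ} (hirr : Irrational (alpha w)) (hd : 1 ≤ d) :
    (kmin w d : ℝ) < (d : ℝ) * alpha w ∧ (d : ℝ) * alpha w < (kmin w d : ℝ) + 1 := by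
  have h1 := alpha_lb' hb hd
  have h2 := alpha_ub' hb hd
  have hir : Irrational ((d : ℝ) * alpha w) := hirr.natCast_mul (by omega)
  constructor
  · rcases lt_or_eq_of_le h1 with h | h
    · exact h
    · exact absurd h.symm (hir.ne_int _)
  · rcases lt_or_eq_of_le h2 with h | h
    · exact h
    · exfalso
      exact (hir.ne_int (kmin w d + 1)) (by push_cast; linarith)

include hb in
lemma cfun_strict (hirr : Irrational (alpha w)) (m n : ℕ) :
    cfun w m < cfun w n + 1 := by
  rcases lt_trichotomy m n with h | h | h
  · obtain ⟨d, rfl⟩ : ∃ d, n = m + d := ⟨n - m, by omega⟩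
    have hd : 1 ≤ d := by omega
    have hwin : win w 0 (m + d) = win w 0 m + win w m d := by
      have := win_add w 0 m d
      simpa using this
    have h1 : (kmin w d : ℝ) ≤ (win w m d : ℝ) := by exact_mod_cast kmin_le hb m d
    have h2 := (alpha_strict hb hirr hd).2
    have hr : ((m : ℝ) + (d : ℝ)) * alpha w = (m : ℝ) * alpha w + (d : ℝ) * alpha w := by ring
    unfold cfun
    rw [hwin]
    push_cast
    rw [hr]
    linarith
  · subst h; unfold cfun; linarith
  · obtain ⟨d, rfl⟩ : ∃ d, m = n + d := ⟨m - n, by omega⟩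
    have hd : 1 ≤ d := by omega
    have hwin : win w 0 (n + d) = win w 0 n + win w n d := by
      have := win_add w 0 n d
      simpa using this
    have h1 : (win w n d : ℝ) ≤ (kmin w d : ℝ) + 1 := by exact_mod_cast le_kmin hb n d
    have h2 := (alpha_strict hb hirr hd).1
    have hr : ((n : ℝ) + (d : ℝ)) * alpha w = (n : ℝ) * alpha w + (d : ℝ) * alpha w := by ring
    unfold cfun
    rw [hwin]
    push_cast
    rw [hr]
    linarith

include hb in
lemma cfun_bdd (hirr : Irrational (alpha w)) :
    BddAbove (Set.range (cfun w)) := by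
  refine ⟨1, ?_⟩
  rintro x ⟨n, rfl⟩
  have := cfun_strict hb hirr n 0
  have h0 : cfun w 0 = 0 := by simp [cfun, win_zero]
  linarith

include hb in
lemma exists_rho (hirr : Irrational (alpha w)) :
    ∃ ρ : ℝ, (∀ n : ℕ, ⌊(n : ℝ) * alpha w + ρ⌋ = win w 0 n) ∨
             (∀ n : ℕ, ⌈(n : ℝ) * alpha w + ρ⌉ = win w 0 n) := by
  set L : ℝ := ⨆ n, cfun w n with hL
  have hle : ∀ n, cfun w n ≤ L := fun n => le_ciSup (cfun_bdd hb hirr) n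
  by_cases hA : ∀ n, L - 1 < cfun w n
  · refine ⟨L, Or.inl fun n => ?_⟩
    rw [Int.floor_eq_iff]
    constructor
    · have := hle n
      unfold cfun at this
      linarith
    · have := hA n
      unfold cfun at this
      push_cast
      linarith
  · push_neg at hA
    obtain ⟨n0, hn0⟩ := hA
    have hge : ∀ n, L - 1 ≤ cfun w n := by
      intro n
      have : L ≤ cfun w n + 1 :=
        ciSup_le fun m => le_of_lt (cfun_strict hb hirr m n)
      linarith
    have hLn0 : L = cfun w n0 + 1 := le_antisymm
      (ciSup_le fun m => le_of_lt (cfun_strict hb hirr m n0))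
      (by have := hge n0; linarith)
    refine ⟨L - 1, Or.inr fun n => ?_⟩
    rw [Int.ceil_eq_iff]
    constructor
    · have h1 : cfun w n < cfun w n0 + 1 := cfun_strict hb hirr n n0
      have h2 : cfun w n < L := by rw [hLn0]; exact h1
      unfold cfun at h2
      push_cast
      linarith
    · have := hge n
      unfold cfun at this
      linarith

lemma toNat_step (w : ℕ → Bool) (n : ℕ) :
    win w 0 (n + 1) - win w 0 n = ((w n).toNat : ℤ) := by
  have := win_add w 0 n 1
  simp only [Nat.zero_add] at this
  rw [this, win_one]
  ring

theorem forward (hst : SturmianWord w) :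
    ∃ α ρ : ℝ, Irrational α ∧ 0 < α ∧ α < 1 ∧
      (w = lowerMechanical α ρ ∨ w = upperMechanical α ρ) := by
  obtain ⟨hb, hnp⟩ := hst
  -- the slope is irrational
  have hirr : Irrational (alpha w) := by
    by_contra h
    obtain ⟨x, hx⟩ := not_not.mp h
    have hden : (1 : ℕ) ≤ x.den := x.pos
    have hxα : ((x.den : ℕ) : ℝ) * alpha w = ((x.num : ℤ) : ℝ) := by
      rw [← hx, Rat.cast_def]
      field_simp
    exact hnp (rational_periodic hb hden hxα)
  -- 0 < α
  have h01 : (1 : ℝ) * alpha w ≤ (kmin w 1 : ℝ) + 1 := by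
    have := alpha_ub' hb (le_refl 1); push_cast at this; simpa using this
  have h00 : (kmin w 1 : ℝ) ≤ (1 : ℝ) * alpha w := by
    have := alpha_lb' hb (le_refl 1); push_cast at this; simpa using this
  have hk0 : (0 : ℝ) ≤ (kmin w 1 : ℝ) := by exact_mod_cast kmin_nonneg hb 1
  have hpos : 0 < alpha w := by
    rcases lt_or_eq_of_le (by linarith : (0:ℝ) ≤ alpha w) with h | h
    · exact h
    · exact absurd h.symm (by simpa using hirr.ne_int 0)
  -- α < 1
  have hfalse : ∃ n0, w n0 = false := by
    by_contra h
    push_neg at h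
    exact hnp ⟨0, 1, le_rfl, fun n _ => by
      have h1 := h (n + 1)
      have h2 := h n
      cases hw1 : w (n + 1) <;> cases hw2 : w n <;> simp_all⟩
  obtain ⟨n0, hn0⟩ := hfalse
  have hkle : kmin w 1 ≤ 0 := by
    have := kmin_le hb n0 1
    rwa [win_one, hn0] at this
  have hlt1 : alpha w < 1 := by
    have : (kmin w 1 : ℝ) ≤ 0 := by exact_mod_cast hkle
    rcases lt_or_eq_of_le (by linarith : alpha w ≤ 1) with h | h
    · exact h
    · exact absurd h (by simpa using hirr.ne_int 1)
  -- mechanical representation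
  obtain ⟨ρ, hρ⟩ := exists_rho hb hirr
  refine ⟨alpha w, ρ, hirr, hpos, hlt1, ?_⟩
  have hcast : ∀ n : ℕ, ((n : ℝ) + 1) = (((n + 1 : ℕ) : ℝ)) := by
    intro n; push_cast; ring
  rcases hρ with hfl | hcl
  · left
    funext n
    show w n = lowerMechanical (alpha w) ρ n
    unfold lowerMechanical
    rw [hcast n, hfl (n + 1), hfl n, toNat_step]
    cases hw : w n <;> simp
  · right
    funext n
    show w n = upperMechanical (alpha w) ρ n
    unfold upperMechanical
    rw [hcast n, hcl (n + 1), hcl n, toNat_step]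
    cases hw : w n <;> simp

end

section
variable {w : ℕ → Bool} {α ρ : ℝ}

lemma mech_sturmian (hirr : Irrational α)
    (G : ℕ → ℤ) (g : ℕ → ℤ)
    (hw : ∀ n, w n = decide (G (n + 1) - G n = 1))
    (hstep : ∀ n, G (n + 1) - G n = 0 ∨ G (n + 1) - G n = 1)
    (hbound : ∀ i n, g n ≤ G (i + n) - G i ∧ G (i + n) - G i ≤ g n + 1)
    (hlin : ∀ n, |(G n : ℝ) - ((n : ℝ) * α + ρ)| ≤ 1) :
    SturmianWord w := by
  have hwt : ∀ n, ((w n).toNat : ℤ) = G (n + 1) - G n := by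
    intro n
    rcases hstep n with h | h <;> rw [hw n, h] <;> simp
  have hwin : ∀ i n, win w i n = G (i + n) - G i := by
    intro i n
    induction n with
    | zero => simp [win]
    | succ n ih =>
        rw [win_add w i n 1, ih, win_one, hwt (i + n)]
        push_cast
        have : i + n + 1 = i + (n + 1) := by omega
        rw [this]
        ring
  constructor
  · -- balanced
    intro u v hu hv hlen
    obtain ⟨i, hi⟩ := hu
    obtain ⟨i', hi'⟩ := hv
    rw [count_eq_win w u i hi, count_eq_win w v i' hi', hlen, hwin, hwin]
    have h1 := hbound i v.length
    have h2 := hbound i' v.length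
    rw [abs_le]
    omega
  · -- aperiodic
    rintro ⟨N, p, hp, hper⟩
    set c : ℤ := G (N + p) - G N with hc
    have claim2 : ∀ n, N ≤ n → G (n + p) - G n = c := by
      intro n hn
      induction n, hn using Nat.le_induction with
      | base => rfl
      | succ n hn ih =>
          have h1 := hwt (n + p)
          have h2 := hwt n
          have h3 : ((w (n + p)).toNat : ℤ) = ((w n).toNat : ℤ) := by
            rw [hper n hn]
          have e : n + p + 1 = n + 1 + p := by omega
          rw [e] at h1
          omega
    have claim3 : ∀ m : ℕ, G (N + m * p) = G N + m * c := by
      intro m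
      induction m with
      | zero => simp
      | succ m ih =>
          have e : N + (m + 1) * p = (N + m * p) + p := by ring
          have := claim2 (N + m * p) (by omega)
          rw [e]
          push_cast
          rw [show ((m : ℤ) + 1) * c = (m : ℤ) * c + c by ring]
          omega
    -- hence p * α = c, contradicting irrationality
    have hpα : (p : ℝ) * α = (c : ℝ) := by
      by_contra hne
      set K : ℝ := (N : ℝ) * α + ρ - (G N : ℝ) with hK
      have hεpos : 0 < |(c : ℝ) - (p : ℝ) * α| := by
        rw [abs_pos]
        intro h
        apply hne
        linarith [sub_eq_zero.mp h]
      obtain ⟨m, hm⟩ := exists_nat_gt ((1 + |K|) / |(c : ℝ) - (p : ℝ) * α|)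
      have hm' : (1 + |K|) < (m : ℝ) * |(c : ℝ) - (p : ℝ) * α| := by
        rw [div_lt_iff₀ hεpos] at hm
        linarith
      have := hlin (N + m * p)
      rw [claim3 m] at this
      have hexp : (G N : ℝ) + (m : ℝ) * (c : ℝ) - (((N + m * p : ℕ) : ℝ) * α + ρ) =
          (m : ℝ) * ((c : ℝ) - (p : ℝ) * α) - K := by
        push_cast
        ring
      rw [show ((G N + (m : ℕ) * c : ℤ) : ℝ) = (G N : ℝ) + (m : ℝ) * (c : ℝ) by push_cast; ring] at this
      rw [hexp] at this
      have habs : (m : ℝ) * |(c : ℝ) - (p : ℝ) * α| - |K| ≤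
          |(m : ℝ) * ((c : ℝ) - (p : ℝ) * α) - K| := by
        have h1 : |(m : ℝ) * ((c : ℝ) - (p : ℝ) * α)| - |K| ≤
            |(m : ℝ) * ((c : ℝ) - (p : ℝ) * α) - K| := by
          have := abs_sub_abs_le_abs_sub ((m : ℝ) * ((c : ℝ) - (p : ℝ) * α)) K
          linarith
        rw [abs_mul, Nat.abs_cast] at h1
        linarith
      linarith
    apply hirr
    refine ⟨(c : ℚ) / (p : ℚ), ?_⟩
    have hp0 : (p : ℝ) ≠ 0 := by positivity
    push_cast
    field_simp
    linarith [hpα]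

lemma lower_sturmian (hirr : Irrational α) (h0 : 0 < α) (h1 : α < 1) :
    SturmianWord (lowerMechanical α ρ) := by
  apply mech_sturmian hirr (fun n => ⌊(n : ℝ) * α + ρ⌋) (fun n => ⌊(n : ℝ) * α⌋)
      (ρ := ρ)
  · intro n
    unfold lowerMechanical
    have e : (((n + 1 : ℕ) : ℝ)) * α + ρ = ((n : ℝ) + 1) * α + ρ := by push_cast; ring
    rw [e]
  · intro n
    have e : (((n + 1 : ℕ) : ℝ)) * α + ρ = ((n : ℝ) * α + ρ) + α := by push_cast; ring
    rw [e]
    set A := (n : ℝ) * α + ρ with hA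
    have hl : ⌊A⌋ ≤ ⌊A + α⌋ := Int.floor_mono (by linarith)
    have hu : ⌊A + α⌋ ≤ ⌊A⌋ + 1 := by
      have : ⌊A + α⌋ ≤ ⌊A + 1⌋ := Int.floor_mono (by linarith)
      rwa [Int.floor_add_one] at this
    omega
  · intro i n
    have e : (((i + n : ℕ) : ℝ)) * α + ρ = ((i : ℝ) * α + ρ) + (n : ℝ) * α := by
      push_cast; ring
    rw [e]
    set A := (i : ℝ) * α + ρ with hA
    set t := (n : ℝ) * α with ht
    have hl : ⌊t⌋ + ⌊A⌋ ≤ ⌊A + t⌋ := by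
      apply Int.le_floor.mpr
      push_cast
      linarith [Int.floor_le A, Int.floor_le t]
    have hu : ⌊A + t⌋ < ⌊A⌋ + ⌊t⌋ + 2 := by
      apply Int.floor_lt.mpr
      push_cast
      linarith [Int.lt_floor_add_one A, Int.lt_floor_add_one t]
    omega
  · intro n
    set y := (n : ℝ) * α + ρ with hy
    rw [abs_le]
    constructor
    · linarith [Int.sub_one_lt_floor y]
    · linarith [Int.floor_le y]

lemma upper_sturmian (hirr : Irrational α) (h0 : 0 < α) (h1 : α < 1) :
    SturmianWord (upperMechanical α ρ) := by
  apply mech_sturmian hirr (fun n => ⌈(n : ℝ) * α + ρ⌉) (fun n => ⌈(n : ℝ) * α⌉ - 1)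
      (ρ := ρ)
  · intro n
    unfold upperMechanical
    have e : (((n + 1 : ℕ) : ℝ)) * α + ρ = ((n : ℝ) + 1) * α + ρ := by push_cast; ring
    rw [e]
  · intro n
    have e : (((n + 1 : ℕ) : ℝ)) * α + ρ = ((n : ℝ) * α + ρ) + α := by push_cast; ring
    rw [e]
    set A := (n : ℝ) * α + ρ with hA
    have hl : ⌈A⌉ ≤ ⌈A + α⌉ := Int.ceil_mono (by linarith)
    have hu : ⌈A + α⌉ ≤ ⌈A⌉ + 1 := by
      have : ⌈A + α⌉ ≤ ⌈A + 1⌉ := Int.ceil_mono (by linarith)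
      rwa [Int.ceil_add_one] at this
    omega
  · intro i n
    have e : (((i + n : ℕ) : ℝ)) * α + ρ = ((i : ℝ) * α + ρ) + (n : ℝ) * α := by
      push_cast; ring
    rw [e]
    set A := (i : ℝ) * α + ρ with hA
    set t := (n : ℝ) * α with ht
    have hl : ⌈A⌉ + ⌈t⌉ - 2 < ⌈A + t⌉ := by
      apply Int.lt_ceil.mpr
      push_cast
      linarith [Int.ceil_lt_add_one A, Int.ceil_lt_add_one t]
    have hu : ⌈A + t⌉ ≤ ⌈A⌉ + ⌈t⌉ := by
      apply Int.ceil_le.mpr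
      push_cast
      linarith [Int.le_ceil A, Int.le_ceil t]
    omega
  · intro n
    set y := (n : ℝ) * α + ρ with hy
    rw [abs_le]
    constructor
    · linarith [Int.le_ceil y]
    · linarith [Int.ceil_lt_add_one y]
end

theorem sturmian_iff_mechanical (w : ℕ → Bool) :
    SturmianWord w ↔
      ∃ α ρ : ℝ, Irrational α ∧ 0 < α ∧ α < 1 ∧
        (w = lowerMechanical α ρ ∨ w = upperMechanical α ρ) := by
  constructor
  · exact forward
  · rintro ⟨α, ρ, hirr, h0, h1, rfl | rfl⟩
    · exact lower_sturmian hirr h0 h1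
    · exact upper_sturmian hirr h0 h1

end StringBricks
end

section
/- Let w : ℕ → {a,b} be a right-infinite binary word that is not balanced. Then there exists a (possibly empty) finite word u over {a,b} such that both a·u·a and b·u·b are factors of w. -/
/-!
STATEMENT 11: If a right-infinite binary word `w` (`a = false`, `b = true`) is
not balanced, then there is a (possibly empty) finite word `u` such that both
`a·u·a` and `b·u·b` are factors of `w`.
-/

namespace StringBricks

def seg (w : ℕ → Bool) (i n : ℕ) : List Bool := List.ofFn fun j : Fin n => w (i + j)

lemma seg_length (w : ℕ → Bool) (i n : ℕ) : (seg w i n).length = n := by simp [seg]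

lemma seg_isFactor (w : ℕ → Bool) (i n : ℕ) : IsFactor w (seg w i n) := by
  refine ⟨i, fun j => ?_⟩
  rw [List.get_eq_getElem]; simp [seg]

lemma seg_cons (w : ℕ → Bool) (i n : ℕ) : seg w i (n+1) = w i :: seg w (i+1) n := by
  simp [seg, List.ofFn_succ]
  funext j
  congr 1
  omega

lemma seg_concat (w : ℕ → Bool) (i n : ℕ) : seg w i (n+1) = seg w i n ++ [w (i+n)] := by
  rw [seg, List.ofFn_succ', List.concat_eq_append]
  simp [seg]

lemma seg_congr {w : ℕ → Bool} {i j : ℕ} (n : ℕ) (h : ∀ t < n, w (i+t) = w (j+t)) :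
    seg w i n = seg w j n := by
  simp only [seg]
  congr 1
  funext t
  exact h t t.isLt

lemma eq_seg_of_isFactor {w : ℕ → Bool} {u : List Bool} (hu : IsFactor w u) :
    ∃ i, u = seg w i u.length := by
  obtain ⟨i, hi⟩ := hu
  refine ⟨i, List.ext_get (by simp [seg_length]) fun t h1 h2 => ?_⟩
  rw [← hi ⟨t, h1⟩]
  simp [seg, List.get_ofFn]

def cnt (w : ℕ → Bool) (i n : ℕ) : ℕ := (seg w i n).count true

lemma cnt_succ (w : ℕ → Bool) (i n : ℕ) :
    cnt w i (n+1) = cnt w i n + (if w (i+n) then 1 else 0) := by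
  rw [cnt, seg_concat, List.count_append]
  cases h : w (i+n) <;> simp [cnt]

lemma cnt_cons (w : ℕ → Bool) (i n : ℕ) :
    cnt w i (n+1) = (if w i then 1 else 0) + cnt w (i+1) n := by
  rw [cnt, seg_cons, List.count_cons]
  cases h : w i <;> simp [cnt, Nat.add_comm]

lemma cnt_le (w : ℕ → Bool) (i n : ℕ) : cnt w i n ≤ n := by
  have := List.count_le_length (l := seg w i n) (a := true)
  rwa [seg_length] at this

lemma cnt_add (w : ℕ → Bool) (i a b : ℕ) :
    cnt w i (a+b) = cnt w i a + cnt w (i+a) b := by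
  induction b with
  | zero => simp [cnt, seg]
  | succ b ih =>
      rw [← Nat.add_assoc, cnt_succ w i (a+b), ih, cnt_succ w (i+a) b,
        ← Nat.add_assoc i a b]
      omega

lemma main (w : ℕ → Bool) :
    ∀ n i j, cnt w j n + 2 ≤ cnt w i n →
      ∃ u : List Bool,
        IsFactor w (false :: (u ++ [false])) ∧ IsFactor w (true :: (u ++ [true])) := by
  intro n
  induction n using Nat.strong_induction_on with
  | _ n IH =>
  intro i j h
  match n with
  | 0 => simp [cnt, seg] at h
  | 1 =>
      have h1 := cnt_le w i 1
      omega
  | (m+2) =>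
  -- first letters
  have ei1 : cnt w i (m+2) = (if w i then 1 else 0) + cnt w (i+1) (m+1) :=
    cnt_cons w i (m+1)
  have ej1 : cnt w j (m+2) = (if w j then 1 else 0) + cnt w (j+1) (m+1) :=
    cnt_cons w j (m+1)
  rcases hwi : w i with _ | _
  · -- w i = false : drop first letters
    rw [hwi] at ei1; simp at ei1
    have : cnt w (j+1) (m+1) ≤ cnt w j (m+2) := by rw [ej1]; split <;> omega
    exact IH (m+1) (by omega) (i+1) (j+1) (by omega)
  rcases hwj : w j with _ | _
  swap
  · -- w j = true : drop first letters
    rw [hwj] at ej1; simp at ej1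
    have : cnt w i (m+2) ≤ 1 + cnt w (i+1) (m+1) := by rw [ei1]; split <;> omega
    exact IH (m+1) (by omega) (i+1) (j+1) (by omega)
  -- now w i = true, w j = false. last letters
  have ei2 : cnt w i (m+2) = cnt w i (m+1) + (if w (i+(m+1)) then 1 else 0) :=
    cnt_succ w i (m+1)
  have ej2 : cnt w j (m+2) = cnt w j (m+1) + (if w (j+(m+1)) then 1 else 0) :=
    cnt_succ w j (m+1)
  rcases hwi' : w (i+(m+1)) with _ | _
  · rw [hwi'] at ei2; simp at ei2
    have : cnt w j (m+1) ≤ cnt w j (m+2) := by rw [ej2]; split <;> omega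
    exact IH (m+1) (by omega) i j (by omega)
  rcases hwj' : w (j+(m+1)) with _ | _
  swap
  · rw [hwj'] at ej2; simp at ej2
    have : cnt w i (m+2) ≤ cnt w i (m+1) + 1 := by rw [ei2]; split <;> omega
    exact IH (m+1) (by omega) i j (by omega)
  -- now w i = true, w j = false, w (i+m+1) = true, w (j+m+1) = false
  by_cases hmid : ∀ t < m, w (i+1+t) = w (j+1+t)
  · refine ⟨seg w (i+1) m, ?_, ?_⟩
    · have e : (false : Bool) :: (seg w (i+1) m ++ [false]) = seg w j (m+2) := by
        rw [seg_cons w j (m+1), seg_concat w (j+1) m, hwj,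
          show j+1+m = j+(m+1) by omega, hwj', seg_congr m hmid]
      rw [e]; exact seg_isFactor w j (m+2)
    · have e : (true : Bool) :: (seg w (i+1) m ++ [true]) = seg w i (m+2) := by
        rw [seg_cons w i (m+1), seg_concat w (i+1) m, hwi,
          show i+1+m = i+(m+1) by omega, hwi']
      rw [e]; exact seg_isFactor w i (m+2)
  · push_neg at hmid
    have hex : ∃ t, t < m ∧ w (i+1+t) ≠ w (j+1+t) := hmid
    classical
    obtain ⟨hkm, hkne⟩ := Nat.find_spec hex
    set k := Nat.find hex with hkdef
    have hmin : ∀ t < k, w (i+1+t) = w (j+1+t) := by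
      intro t ht
      have h2 := Nat.find_min hex ht
      push_neg at h2
      by_contra hne
      exact hne (by_contra fun hh => hh (h2 (by omega)))
    rcases hx : w (i+1+k) with _ | _
    · -- x = false, y = true : use suffix, induction
      have hy : w (j+1+k) = true := by
        cases hyy : w (j+1+k)
        · exact absurd (by rw [hx, hyy]) hkne
        · rfl
      have hck : cnt w (i+1) k = cnt w (j+1) k := by
        unfold cnt; rw [seg_congr k hmin]
      have hpi : cnt w i (k+2) = 1 + cnt w (i+1) k := by
        rw [cnt_succ w i (k+1), cnt_cons w i k, hwi,
          show i+(k+1) = i+1+k by omega, hx]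
        simp
      have hpj : cnt w j (k+2) = 1 + cnt w (j+1) k := by
        rw [cnt_succ w j (k+1), cnt_cons w j k, hwj,
          show j+(k+1) = j+1+k by omega, hy]
        simp [Nat.add_comm]
      have hsi : cnt w i (m+2) = cnt w i (k+2) + cnt w (i+(k+2)) (m-k) := by
        rw [show m+2 = (k+2)+(m-k) by omega, cnt_add]
      have hsj : cnt w j (m+2) = cnt w j (k+2) + cnt w (j+(k+2)) (m-k) := by
        rw [show m+2 = (k+2)+(m-k) by omega, cnt_add]
      exact IH (m-k) (by omega) (i+(k+2)) (j+(k+2)) (by omega)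
    · -- x = true, y = false : direct answer with prefix
      have hy : w (j+1+k) = false := by
        cases hyy : w (j+1+k)
        · rfl
        · exact absurd (by rw [hx, hyy]) hkne
      refine ⟨seg w (i+1) k, ?_, ?_⟩
      · have e : (false : Bool) :: (seg w (i+1) k ++ [false]) = seg w j (k+2) := by
          rw [seg_cons w j (k+1), seg_concat w (j+1) k, hwj, hy, seg_congr k hmin]
        rw [e]; exact seg_isFactor w j (k+2)
      · have e : (true : Bool) :: (seg w (i+1) k ++ [true]) = seg w i (k+2) := by
          rw [seg_cons w i (k+1), seg_concat w (i+1) k, hwi, hx]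
        rw [e]; exact seg_isFactor w i (k+2)

theorem not_balanced_gives_axa_bxb (w : ℕ → Bool) (h : ¬ BalancedWord w) :
    ∃ u : List Bool,
      IsFactor w (false :: (u ++ [false])) ∧ IsFactor w (true :: (u ++ [true])) := by
  rw [BalancedWord] at h
  push_neg at h
  obtain ⟨u, v, hu, hv, hlen, habs⟩ := h
  obtain ⟨i, hi⟩ := eq_seg_of_isFactor hu
  obtain ⟨j, hj⟩ := eq_seg_of_isFactor hv
  have hcu : u.count true = cnt w i u.length := by rw [cnt, ← hi]
  have hcv : v.count true = cnt w j v.length := by rw [cnt, ← hj]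
  rw [hlen] at hcu
  set n := v.length
  rcases abs_cases ((u.count true : ℤ) - (v.count true : ℤ)) with ⟨he, _⟩ | ⟨he, _⟩ <;>
    rw [he] at habs
  · exact main w n i j (by omega)
  · exact main w n j i (by omega)


end StringBricks
end
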